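/- Let M ∈ ℝ^{m×m} be symmetric positive semidefinite and let L ∈ ℝ^{m×m} be symmetric positive definite. Then tr(M·L⁻¹)/2 + tr(L)/2 ≥ tr(M^{1/2}), where M^{1/2} denotes the positive semidefinite square root of M. Moreover, if M is positive definite, then equality holds for L = M^{1/2}. -/

import Mathlib

open Matrix

open scoped ComplexOrder in
noncomputable def Matrix.PosSemidef.sqrt {n : Type*} [Fintype n] [DecidableEq n]
    {𝕜 : Type*} [RCLike 𝕜] {A : Matrix n n 𝕜} (hA : A.PosSemidef) : Matrix n n 𝕜 :=
  hA.1.eigenvectorUnitary.1 * diagonal ((↑) ∘ (√·) ∘ hA.1.eigenvalues) *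
  (star hA.1.eigenvectorUnitary : Matrix n n 𝕜)

private lemma psd_sqrt_aux {m : ℕ} {A : Matrix (Fin m) (Fin m) ℝ}
    (hA : A.PosSemidef) : hA.sqrt.PosSemidef := by
  unfold Matrix.PosSemidef.sqrt
  have hD : (diagonal (RCLike.ofReal ∘ (√·) ∘ hA.1.eigenvalues : Fin m → ℝ)).PosSemidef := by
    rw [posSemidef_diagonal_iff]
    intro i
    simp [Real.sqrt_nonneg]
  have := hD.mul_mul_conjTranspose_same (hA.1.eigenvectorUnitary.1)
  convert this using 1
  rw [Matrix.star_eq_conjTranspose]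

private lemma sqrt_mul_self_aux {m : ℕ} {A : Matrix (Fin m) (Fin m) ℝ}
    (hA : A.PosSemidef) : hA.sqrt * hA.sqrt = A := by
  unfold Matrix.PosSemidef.sqrt
  conv_rhs => rw [hA.1.spectral_theorem, Unitary.conjStarAlgAut_apply]
  have hu : (star hA.1.eigenvectorUnitary : Matrix (Fin m) (Fin m) ℝ) * hA.1.eigenvectorUnitary.1 = 1 :=
    Unitary.coe_star_mul_self _
  have hd : diagonal (RCLike.ofReal ∘ (√·) ∘ hA.1.eigenvalues : Fin m → ℝ) *
      diagonal (RCLike.ofReal ∘ (√·) ∘ hA.1.eigenvalues : Fin m → ℝ) =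
      diagonal (RCLike.ofReal ∘ hA.1.eigenvalues) := by
    rw [diagonal_mul_diagonal]
    congr 1
    funext i
    simp [Real.mul_self_sqrt (hA.eigenvalues_nonneg i)]
  simp only [Matrix.mul_assoc]
  rw [← Matrix.mul_assoc _ _ (diagonal _ * _), hu, Matrix.one_mul, ← Matrix.mul_assoc (diagonal _), hd]

private lemma trace_nonneg_of_posSemidef {m : ℕ} {A : Matrix (Fin m) (Fin m) ℝ}
    (hA : A.PosSemidef) : 0 ≤ A.trace := by
  exact hA.trace_nonneg

/-- For `M` symmetric PSD and `L` symmetric positive definite,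
`tr(M L⁻¹)/2 + tr(L)/2 ≥ tr(M^{1/2})`; if moreover `M` is positive definite,
equality holds for `L = M^{1/2}`. -/
theorem stmt6 {m : ℕ} (M L : Matrix (Fin m) (Fin m) ℝ)
    (hM : M.PosSemidef) (hL : L.PosDef) :
    hM.sqrt.trace ≤ (M * L⁻¹).trace / 2 + L.trace / 2 ∧
      (M.PosDef →
        (M * (hM.sqrt)⁻¹).trace / 2 + hM.sqrt.trace / 2 = hM.sqrt.trace) := by
  set S := hM.sqrt with hS
  have hSsymm : Sᵀ = S := (psd_sqrt_aux hM).isHermitian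
  have hSS : S * S = M := sqrt_mul_self_aux hM
  set R := hL.posSemidef.sqrt with hR
  have hRsymm : Rᵀ = R := (psd_sqrt_aux hL.posSemidef).isHermitian
  have hRR : R * R = L := sqrt_mul_self_aux hL.posSemidef
  have hRunit : IsUnit R := by
    rw [Matrix.isUnit_iff_isUnit_det]
    have : R.det * R.det = L.det := by rw [← Matrix.det_mul, hRR]
    have hLdet := hL.det_pos
    refine isUnit_iff_ne_zero.mpr fun h => ?_
    rw [h, mul_zero] at this
    exact hLdet.ne' this.symm
  have hRinv : R * R⁻¹ = 1 := Matrix.mul_nonsing_inv _ (Matrix.isUnit_iff_isUnit_det _ |>.mp hRunit)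
  have hRinv' : R⁻¹ * R = 1 := Matrix.nonsing_inv_mul _ (Matrix.isUnit_iff_isUnit_det _ |>.mp hRunit)
  have hRinvT : (R⁻¹)ᵀ = R⁻¹ := by rw [Matrix.transpose_nonsing_inv, hRsymm]
  constructor
  · -- main inequality
    set X := R⁻¹ * S - R with hX
    have hpsd : (Xᴴ * X).PosSemidef := Matrix.posSemidef_conjTranspose_mul_self X
    have htr : 0 ≤ (Xᴴ * X).trace := trace_nonneg_of_posSemidef hpsd
    have hXH : Xᴴ = S * R⁻¹ - R := by
      have hXT : Xᴴ = Xᵀ := by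
        ext i j; simp [Matrix.conjTranspose_apply, Matrix.transpose_apply]
      rw [hXT, hX, Matrix.transpose_sub, Matrix.transpose_mul, hRinvT, hSsymm, hRsymm]
    have hexp : Xᴴ * X = S * L⁻¹ * S - S - S + L := by
      rw [hXH, hX]
      have hLinv : L⁻¹ = R⁻¹ * R⁻¹ := by
        rw [← hRR, Matrix.mul_inv_rev]
      rw [Matrix.sub_mul, Matrix.mul_sub, Matrix.mul_sub]
      rw [hLinv]
      have h1 : S * R⁻¹ * (R⁻¹ * S) = S * (R⁻¹ * R⁻¹) * S := by
        simp only [Matrix.mul_assoc]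
      have h2 : S * R⁻¹ * R = S := by rw [Matrix.mul_assoc, hRinv', Matrix.mul_one]
      have h3 : R * (R⁻¹ * S) = S := by rw [← Matrix.mul_assoc, hRinv, Matrix.one_mul]
      rw [h1, h2, h3, hRR]
      abel
    rw [hexp] at htr
    have htrace : (S * L⁻¹ * S).trace = (M * L⁻¹).trace := by
      rw [Matrix.trace_mul_comm, ← Matrix.mul_assoc, hSS]
    simp only [Matrix.trace_add, Matrix.trace_sub] at htr
    rw [htrace] at htr
    linarith
  · -- equality case
    intro hMpd
    have hSunit : IsUnit S.det := by
      have : S.det * S.det = M.det := by rw [← Matrix.det_mul, hSS]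
      have hMdet := hMpd.det_pos
      refine isUnit_iff_ne_zero.mpr fun h => ?_
      rw [h, mul_zero] at this
      exact hMdet.ne' this.symm
    have : M * S⁻¹ = S := by
      rw [← hSS, Matrix.mul_assoc, Matrix.mul_nonsing_inv _ hSunit, Matrix.mul_one]
    rw [this]
    ring
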